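/- Let D be a finite directed graph on n vertices (with no self-loops). If D contains no anti-directed cycle, then D has at most 2n edges. -/
import Mathlib


/-- A directed graph `D` contains an anti-directed cycle: a cyclic sequence
`u₁, …, u_{2ℓ}` with `ℓ ≥ 2` in which every even-indexed vertex is the source of its two
incident cycle edges (here the even-indexed vertices are `x i` and the odd-indexed
vertices are `y i`, with edges `(x i, y i)` and `(x i, y (i-1))` for all `i : ZMod ℓ`),
where the even-indexed vertices are pairwise distinct and the odd-indexed vertices are
pairwise distinct. -/
def HasAntiDirectedCycle {V : Type*} (D : V → V → Prop) : Prop :=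
  ∃ (ℓ : ℕ) (x y : ZMod ℓ → V), 2 ≤ ℓ ∧
    Function.Injective x ∧ Function.Injective y ∧
    ∀ i : ZMod ℓ, D (x i) (y i) ∧ D (x i) (y (i - 1))

private lemma zmod_sub_one_val {n : ℕ} [NeZero n] (k : ZMod n) (h : k ≠ 0) :
    (k - 1).val = k.val - 1 := by
  have h1 : 1 ≤ k.val := by
    rcases Nat.eq_zero_or_pos k.val with h0 | h0
    · exact absurd ((ZMod.val_eq_zero k).mp h0) h
    · exact h0
  have hk : ((k.val : ℕ) : ZMod n) = k := ZMod.natCast_rightInverse k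
  have : k - 1 = ((k.val - 1 : ℕ) : ZMod n) := by
    push_cast [Nat.cast_sub h1, hk]; ring
  rw [this, ZMod.val_cast_of_lt (by have := ZMod.val_lt k; omega)]

private lemma zmod_zero_sub_one_val {n : ℕ} (h : 2 ≤ n) : (0 - 1 : ZMod n).val = n - 1 := by
  haveI : NeZero n := ⟨by omega⟩
  have : (0 - 1 : ZMod n) = ((n - 1 : ℕ) : ZMod n) := by
    push_cast [Nat.cast_sub (by omega : 1 ≤ n)]; simp
  rw [this, ZMod.val_cast_of_lt (by omega)]

section Core

variable {V : Type*} [Fintype V] [DecidableEq V] (D : V → V → Prop) [DecidableRel D]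

lemma exists_cycle_of_min_degree_two (s t : Finset V) (hs : s.Nonempty)
    (h1 : ∀ u ∈ s, 2 ≤ (t.filter fun v => D u v).card)
    (h2 : ∀ v ∈ t, 2 ≤ (s.filter fun u => D u v).card) :
    HasAntiDirectedCycle D := by
  classical
  obtain ⟨u0, hu0⟩ := hs
  obtain ⟨v0, hv0⟩ := Finset.card_pos.mp
    (by have := h1 u0 hu0; omega : 0 < (t.filter fun v => D u0 v).card)
  rw [Finset.mem_filter] at hv0
  have hstep : ∀ q : {p : V × V // p.1 ∈ s ∧ p.2 ∈ t ∧ D p.1 p.2},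
      ∃ r : {p : V × V // p.1 ∈ s ∧ p.2 ∈ t ∧ D p.1 p.2},
        D r.1.1 q.1.2 ∧ r.1.1 ≠ q.1.1 ∧ r.1.2 ≠ q.1.2 := by
    rintro ⟨⟨a, b⟩, ha, hb, hab⟩
    obtain ⟨a', ha', hne⟩ := Finset.exists_mem_ne
      (s := s.filter fun u => D u b) (by have := h2 b hb; omega) a
    rw [Finset.mem_filter] at ha'
    obtain ⟨b', hb', hbne⟩ := Finset.exists_mem_ne
      (s := t.filter fun v => D a' v) (by have := h1 a' ha'.1; omega) b
    rw [Finset.mem_filter] at hb'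
    exact ⟨⟨(a', b'), ha'.1, hb'.1, hb'.2⟩, ha'.2, hne, hbne⟩
  choose step hcross0 hxne0 hyne0 using hstep
  set p : ℕ → {p : V × V // p.1 ∈ s ∧ p.2 ∈ t ∧ D p.1 p.2} :=
    fun n => step^[n] ⟨(u0, v0), hu0, hv0.1, hv0.2⟩ with hpdef
  set x : ℕ → V := fun n => (p n).1.1 with hxdef
  set y : ℕ → V := fun n => (p n).1.2 with hydef
  have hpsucc : ∀ n, p (n + 1) = step (p n) := fun n => Function.iterate_succ_apply' _ _ _
  have hDxy : ∀ n, D (x n) (y n) := fun n => (p n).2.2.2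
  have hcross : ∀ n, D (x (n + 1)) (y n) := by
    intro n; have := hcross0 (p n); rw [← hpsucc] at this; exact this
  have hxne : ∀ n, x (n + 1) ≠ x n := by
    intro n; have := hxne0 (p n); rw [← hpsucc] at this; exact this
  have hyne : ∀ n, y (n + 1) ≠ y n := by
    intro n; have := hyne0 (p n); rw [← hpsucc] at this; exact this
  -- first collision
  have hex : ∃ n, ∃ i < n, y i = y n ∨ x i = x n := by
    obtain ⟨i, j, hne, heq⟩ := Finite.exists_ne_map_eq_of_infinite y
    rcases hne.lt_or_gt with h | h
    · exact ⟨j, i, h, Or.inl heq⟩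
    · exact ⟨i, j, h, Or.inl heq.symm⟩
  set j := Nat.find hex with hjdef
  obtain ⟨i0, hi0lt, hi0⟩ := Nat.find_spec hex
  have hxinj : ∀ a b, a < j → b < j → x a = x b → a = b := by
    intro a b ha hb heq
    by_contra hne
    rcases Nat.lt_or_ge a b with h | h
    · exact Nat.find_min hex hb ⟨a, h, Or.inr heq⟩
    · exact Nat.find_min hex ha ⟨b, by omega, Or.inr heq.symm⟩
  have hyinj : ∀ a b, a < j → b < j → y a = y b → a = b := by
    intro a b ha hb heq
    by_contra hne
    rcases Nat.lt_or_ge a b with h | h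
    · exact Nat.find_min hex hb ⟨a, h, Or.inl heq⟩
    · exact Nat.find_min hex ha ⟨b, by omega, Or.inl heq.symm⟩
  by_cases hxcase : ∃ i < j, x i = x j
  · -- source collision
    obtain ⟨i, hij, hxij⟩ := hxcase
    have hj1 : 1 ≤ j := by omega
    have hine : i ≠ j - 1 := by
      intro h
      apply hxne (j - 1)
      rw [show j - 1 + 1 = j by omega, ← hxij, h]
    have hl2 : 2 ≤ j - i := by omega
    haveI : NeZero (j - i) := ⟨by omega⟩
    refine ⟨j - i, fun k => x (i + k.val), fun k => y (i + k.val), hl2, ?_, ?_, ?_⟩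
    · intro k1 k2 h
      have h1 := ZMod.val_lt k1; have h2 := ZMod.val_lt k2
      have := hxinj (i + k1.val) (i + k2.val) (by omega) (by omega) h
      exact ZMod.val_injective _ (by omega)
    · intro k1 k2 h
      have h1 := ZMod.val_lt k1; have h2 := ZMod.val_lt k2
      have := hyinj (i + k1.val) (i + k2.val) (by omega) (by omega) h
      exact ZMod.val_injective _ (by omega)
    · intro k
      refine ⟨hDxy _, ?_⟩
      beta_reduce
      by_cases hk : k = 0
      · subst hk
        rw [zmod_zero_sub_one_val hl2, ZMod.val_zero,
          show i + (j - i - 1) = j - 1 by omega, Nat.add_zero, hxij,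
          show j = (j - 1) + 1 by omega]
        exact hcross (j - 1)
      · rw [zmod_sub_one_val k hk]
        have hk1 : 1 ≤ k.val := by
          rcases Nat.eq_zero_or_pos k.val with h0 | h0
          · exact absurd ((ZMod.val_eq_zero k).mp h0) hk
          · exact h0
        rw [show i + (k.val - 1) = (i + k.val - 1) by omega,
          show i + k.val = (i + k.val - 1) + 1 by omega]
        exact hcross _
  · -- sink collision
    have hyij : y i0 = y j := by
      rcases hi0 with h | h
      · exact h
      · exact absurd ⟨i0, hi0lt, h⟩ hxcase
    have hxinj' : ∀ a b, a ≤ j → b ≤ j → x a = x b → a = b := by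
      intro a b ha hb heq
      rcases eq_or_lt_of_le ha with rfl | ha'
      · rcases eq_or_lt_of_le hb with rfl | hb'
        · rfl
        · exact absurd ⟨b, hb', heq.symm⟩ hxcase
      · rcases eq_or_lt_of_le hb with rfl | hb'
        · exact absurd ⟨a, ha', heq⟩ hxcase
        · exact hxinj a b ha' hb' heq
    set i := i0 with hidef
    have hine : i ≠ j - 1 := by
      intro h
      apply hyne (j - 1)
      rw [show j - 1 + 1 = j by omega, ← hyij, h]
    have hl2 : 2 ≤ j - i := by omega
    haveI : NeZero (j - i) := ⟨by omega⟩
    refine ⟨j - i, fun k => x (i + 1 + k.val), fun k => y (i + 1 + k.val), hl2, ?_, ?_, ?_⟩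
    · intro k1 k2 h
      have h1 := ZMod.val_lt k1; have h2 := ZMod.val_lt k2
      have := hxinj' (i + 1 + k1.val) (i + 1 + k2.val) (by omega) (by omega) h
      exact ZMod.val_injective _ (by omega)
    · intro k1 k2 h
      have h1 := ZMod.val_lt k1; have h2 := ZMod.val_lt k2
      -- indices in [i+1, j]; y j = y i
      have key : ∀ a b, i + 1 ≤ a → a ≤ j → i + 1 ≤ b → b ≤ j → y a = y b → a = b := by
        intro a b ha1 ha2 hb1 hb2 heq
        rcases eq_or_lt_of_le ha2 with rfl | ha'
        · rcases eq_or_lt_of_le hb2 with rfl | hb'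
          · rfl
          · have : i = b := hyinj i b (by omega) hb' (hyij.trans heq)
            omega
        · rcases eq_or_lt_of_le hb2 with rfl | hb'
          · have : a = i := hyinj a i ha' (by omega) (heq.trans hyij.symm)
            omega
          · exact hyinj a b ha' hb' heq
      have := key (i + 1 + k1.val) (i + 1 + k2.val) (by omega) (by omega)
        (by omega) (by omega) h
      exact ZMod.val_injective _ (by omega)
    · intro k
      refine ⟨hDxy _, ?_⟩
      beta_reduce
      by_cases hk : k = 0
      · subst hk
        rw [zmod_zero_sub_one_val hl2, ZMod.val_zero, Nat.add_zero,
          show i + 1 + (j - i - 1) = j by omega, ← hyij]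
        exact hcross i
      · rw [zmod_sub_one_val k hk]
        have hk1 : 1 ≤ k.val := by
          rcases Nat.eq_zero_or_pos k.val with h0 | h0
          · exact absurd ((ZMod.val_eq_zero k).mp h0) hk
          · exact h0
        rw [show i + 1 + (k.val - 1) = (i + k.val) by omega,
          show i + 1 + k.val = (i + k.val) + 1 by omega]
        exact hcross _

lemma core_bound (hnoc : ¬ HasAntiDirectedCycle D) :
    ∀ n (s t : Finset V), s.card + t.card ≤ n →
      (∑ u ∈ s, (t.filter fun v => D u v).card) ≤ s.card + t.card := by
  intro n
  induction n with
  | zero =>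
    intro s t h
    have hs : s = ∅ := Finset.card_eq_zero.mp (by omega)
    subst hs; simp
  | succ n ih =>
    intro s t hcard
    by_cases hc1 : ∃ u ∈ s, (t.filter fun v => D u v).card ≤ 1
    · obtain ⟨u, hu, hdeg⟩ := hc1
      have hs1 : 1 ≤ s.card := Finset.card_pos.mpr ⟨u, hu⟩
      have hce : (s.erase u).card = s.card - 1 := Finset.card_erase_of_mem hu
      have hih := ih (s.erase u) t (by omega)
      calc (∑ u ∈ s, (t.filter fun v => D u v).card)
          = (t.filter fun v => D u v).card + ∑ w ∈ s.erase u, (t.filter fun v => D w v).card :=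
            (Finset.add_sum_erase s _ hu).symm
        _ ≤ 1 + ((s.erase u).card + t.card) := Nat.add_le_add hdeg hih
        _ ≤ s.card + t.card := by omega
    · by_cases hc2 : ∃ v ∈ t, (s.filter fun u => D u v).card ≤ 1
      · obtain ⟨v, hv, hdeg⟩ := hc2
        have ht1 : 1 ≤ t.card := Finset.card_pos.mpr ⟨v, hv⟩
        have hce : (t.erase v).card = t.card - 1 := Finset.card_erase_of_mem hv
        have hsplit : ∀ u ∈ s, (t.filter fun w => D u w).card ≤
            ((t.erase v).filter fun w => D u w).card + (if D u v then 1 else 0) := by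
          intro u _
          by_cases hduv : D u v
          · simp only [hduv, if_true]
            have hsub : (t.filter fun w => D u w) ⊆
                insert v ((t.erase v).filter fun w => D u w) := by
              intro w hw
              rw [Finset.mem_filter] at hw
              by_cases hwv : w = v
              · rw [hwv]; exact Finset.mem_insert_self _ _
              · exact Finset.mem_insert_of_mem
                  (Finset.mem_filter.mpr ⟨Finset.mem_erase.mpr ⟨hwv, hw.1⟩, hw.2⟩)
            calc (t.filter fun w => D u w).card
                ≤ (insert v ((t.erase v).filter fun w => D u w)).card := Finset.card_le_card hsub
              _ ≤ ((t.erase v).filter fun w => D u w).card + 1 := Finset.card_insert_le _ _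
          · simp only [hduv, if_false, Nat.add_zero]
            apply Finset.card_le_card
            intro w hw
            rw [Finset.mem_filter] at hw
            have hwv : w ≠ v := by rintro rfl; exact hduv hw.2
            exact Finset.mem_filter.mpr ⟨Finset.mem_erase.mpr ⟨hwv, hw.1⟩, hw.2⟩
        have hih := ih s (t.erase v) (by omega)
        calc (∑ u ∈ s, (t.filter fun w => D u w).card)
            ≤ ∑ u ∈ s, (((t.erase v).filter fun w => D u w).card + (if D u v then 1 else 0)) :=
              Finset.sum_le_sum hsplit
          _ = (∑ u ∈ s, ((t.erase v).filter fun w => D u w).card)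
              + ∑ u ∈ s, (if D u v then 1 else 0) := Finset.sum_add_distrib
          _ ≤ (s.card + (t.erase v).card) + (s.filter fun u => D u v).card := by
              refine Nat.add_le_add hih ?_
              rw [Finset.card_filter]
          _ ≤ s.card + t.card := by omega
      · push_neg at hc1 hc2
        rcases s.eq_empty_or_nonempty with rfl | hs
        · simp
        · exact absurd (exists_cycle_of_min_degree_two D s t hs
            (fun u hu => hc1 u hu) (fun v hv => hc2 v hv)) hnoc

end Core


/-- A finite directed graph on `n` vertices with no self-loops and no
anti-directed cycle has at most `2n` edges. -/
theorem no_anti_directed_cycle_few_edges {V : Type*} [Fintype V]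
    (D : V → V → Prop) (hD : ∀ v : V, ¬ D v v)
    (hnoc : ¬ HasAntiDirectedCycle D) :
    {p : V × V | D p.1 p.2}.ncard ≤ 2 * Fintype.card V := by
  classical
  have h0 : {p : V × V | D p.1 p.2} =
      ↑(Finset.univ.filter fun p : V × V => D p.1 p.2) := by
    ext p; simp
  rw [h0, Set.ncard_coe_finset]
  have h1 : (Finset.univ.filter fun p : V × V => D p.1 p.2).card
      = ∑ u : V, (Finset.univ.filter fun v => D u v).card := by
    rw [Finset.card_eq_sum_card_fiberwise (f := Prod.fst)
      (fun p _ => Finset.mem_univ p.1)]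
    refine Finset.sum_congr rfl fun u _ => ?_
    have himg : ((Finset.univ.filter fun p : V × V => D p.1 p.2).filter
        fun p => p.1 = u) = (Finset.univ.filter fun v => D u v).image fun v => (u, v) := by
      ext ⟨a, b⟩
      simp only [Finset.mem_filter, Finset.mem_image, Finset.mem_univ, true_and]
      constructor
      · rintro ⟨hab, rfl⟩; exact ⟨b, hab, rfl⟩
      · rintro ⟨w, hw, heq⟩
        rw [Prod.mk.injEq] at heq
        obtain ⟨rfl, rfl⟩ := heq
        exact ⟨hw, rfl⟩
    rw [himg, Finset.card_image_of_injective _ (by intro a b h; simpa using h)]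
  rw [h1]
  have := core_bound D hnoc (Fintype.card V + Fintype.card V)
    Finset.univ Finset.univ (by simp)
  simpa [Finset.card_univ, two_mul] using this
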